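/- In $A = \mathbb{C}[[x,y]]/(y^2 - x^2)$, the subring generated by $x$ and $x^k y$ is isomorphic to $\mathbb{C}[[x, y_k]]/(y_k^2 - x^{2k+2})$, where $y_k = x^k y$; i.e. the element $y_k = x^k y$ satisfies $y_k^2 - x^{2k+2} = 0$ in $A$, and this is the only relation. -/

import Mathlib

open MvPowerSeries Finsupp

noncomputable section NodeAux

variable (k : ℕ)

/-- exponent shift: (m,n) ↦ (m + k n, n) -/
def eAux (d : Fin 2 →₀ ℕ) : Fin 2 →₀ ℕ := Finsupp.single 0 (k * d 1) + d

lemma eAux_apply_one (d : Fin 2 →₀ ℕ) : eAux k d 1 = d 1 := by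
  simp [eAux, Finsupp.add_apply, Finsupp.single_apply]

lemma eAux_apply_zero (d : Fin 2 →₀ ℕ) : eAux k d 0 = k * d 1 + d 0 := by
  simp [eAux, Finsupp.add_apply, Finsupp.single_apply]

lemma eAux_add (a b : Fin 2 →₀ ℕ) : eAux k (a + b) = eAux k a + eAux k b := by
  simp only [eAux, Finsupp.add_apply, mul_add, Finsupp.single_add]
  abel

lemma eAux_injective : Function.Injective (eAux k) := by
  intro a b h
  have h1 : a 1 = b 1 := by
    have := congrArg (fun f => f 1) h
    simpa [eAux_apply_one] using this
  have h2 : Finsupp.single 0 (k * a 1) + a = Finsupp.single 0 (k * a 1) + b := by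
    have h3 := h
    rw [eAux, eAux, h1] at h3
    rw [h1]
    exact h3
  exact add_left_cancel h2

lemma eAux_zero : eAux k 0 = 0 := by simp [eAux]

/-- substitution X ↦ X, Y ↦ X^k Y, as a bare function on power series -/
def sFun (f : MvPowerSeries (Fin 2) ℂ) : MvPowerSeries (Fin 2) ℂ :=
  fun d => if k * d 1 ≤ d 0 then f (d - Finsupp.single 0 (k * d 1)) else 0

lemma coeff_sFun (f : MvPowerSeries (Fin 2) ℂ) (d : Fin 2 →₀ ℕ) :
    coeff d (sFun k f) =
      if k * d 1 ≤ d 0 then coeff (d - Finsupp.single 0 (k * d 1)) f else 0 := rfl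

lemma single_le_of (d : Fin 2 →₀ ℕ) (h : k * d 1 ≤ d 0) :
    Finsupp.single (0 : Fin 2) (k * d 1) ≤ d :=
  Finsupp.single_le_iff.mpr h

lemma eAux_sub (d : Fin 2 →₀ ℕ) (h : k * d 1 ≤ d 0) :
    eAux k (d - Finsupp.single 0 (k * d 1)) = d := by
  have h1 : ((d - Finsupp.single 0 (k * d 1) : Fin 2 →₀ ℕ)) 1 = d 1 := by
    rw [Finsupp.tsub_apply]
    simp [Finsupp.single_apply]
  rw [eAux, h1, add_tsub_cancel_of_le (single_le_of k d h)]

lemma coeff_sFun_eAux (f : MvPowerSeries (Fin 2) ℂ) (d : Fin 2 →₀ ℕ) :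
    coeff (eAux k d) (sFun k f) = coeff d f := by
  rw [coeff_sFun]
  rw [if_pos (by rw [eAux_apply_one, eAux_apply_zero]; exact Nat.le_add_right _ _)]
  rw [eAux_apply_one]
  have : eAux k d - Finsupp.single 0 (k * d 1) = d := by
    rw [eAux, add_tsub_cancel_left]
  rw [this]


lemma sub_eAux (a : Fin 2 →₀ ℕ) :
    eAux k a - Finsupp.single 0 (k * (eAux k a) 1) = a := by
  rw [eAux_apply_one, eAux, add_tsub_cancel_left]

lemma sFun_injective : Function.Injective (sFun k) := fun f g h =>
  MvPowerSeries.ext fun d => by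
    rw [← coeff_sFun_eAux k f d, ← coeff_sFun_eAux k g d, h]

lemma sFun_add (f g : MvPowerSeries (Fin 2) ℂ) :
    sFun k (f + g) = sFun k f + sFun k g := by
  apply MvPowerSeries.ext; intro d
  rw [map_add, coeff_sFun, coeff_sFun, coeff_sFun, map_add]
  split_ifs <;> simp

lemma sFun_monomial (n : Fin 2 →₀ ℕ) (a : ℂ) :
    sFun k (MvPowerSeries.monomial n a) = MvPowerSeries.monomial (eAux k n) a := by
  apply MvPowerSeries.ext; intro d
  rw [coeff_sFun, MvPowerSeries.coeff_monomial]
  by_cases h : k * d 1 ≤ d 0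
  · rw [if_pos h, MvPowerSeries.coeff_monomial]
    have hd : eAux k (d - Finsupp.single 0 (k * d 1)) = d := eAux_sub k d h
    by_cases he : d - Finsupp.single 0 (k * d 1) = n
    · rw [if_pos he, if_pos (by rw [← he, hd])]
    · rw [if_neg he, if_neg (fun hc => he (eAux_injective k (by rw [hd, hc])))]
  · rw [if_neg h, eq_comm, MvPowerSeries.coeff_monomial, if_neg]
    intro hc
    apply h
    rw [hc, eAux_apply_one, eAux_apply_zero]
    exact Nat.le_add_right _ _

lemma sFun_one : sFun k 1 = 1 := by
  have h1 : (1 : MvPowerSeries (Fin 2) ℂ) = MvPowerSeries.monomial 0 1 :=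
    (MvPowerSeries.monomial_zero_one (σ := Fin 2) (R := ℂ)).symm
  rw [h1, sFun_monomial, eAux_zero, ← h1]

lemma sFun_mul (f g : MvPowerSeries (Fin 2) ℂ) :
    sFun k (f * g) = sFun k f * sFun k g := by
  classical
  apply MvPowerSeries.ext; intro d
  by_cases h : k * d 1 ≤ d 0
  · rw [coeff_sFun, if_pos h, MvPowerSeries.coeff_mul, MvPowerSeries.coeff_mul]
    set c := d - Finsupp.single 0 (k * d 1) with hc
    have hd : eAux k c = d := eAux_sub k d h
    have hfilter : ∑ p ∈ Finset.HasAntidiagonal.antidiagonal d,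
        coeff p.1 (sFun k f) * coeff p.2 (sFun k g)
        = ∑ p ∈ (Finset.HasAntidiagonal.antidiagonal d).filter
            (fun p : (Fin 2 →₀ ℕ) × (Fin 2 →₀ ℕ) => k * p.1 1 ≤ p.1 0 ∧ k * p.2 1 ≤ p.2 0),
          coeff p.1 (sFun k f) * coeff p.2 (sFun k g) := by
      refine (Finset.sum_filter_of_ne ?_).symm
      intro p _ hne
      by_contra hnp
      apply hne
      rcases Decidable.not_and_iff_or_not.mp hnp with h1 | h1
      · rw [coeff_sFun, if_neg h1, zero_mul]
      · rw [coeff_sFun (f := g), if_neg h1, mul_zero]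
    rw [hfilter]
    refine Finset.sum_nbij' (fun p => (eAux k p.1, eAux k p.2))
      (fun p => (p.1 - Finsupp.single 0 (k * p.1 1), p.2 - Finsupp.single 0 (k * p.2 1)))
      ?_ ?_ ?_ ?_ ?_
    · intro p hp
      simp only [Finset.mem_filter, Finset.HasAntidiagonal.mem_antidiagonal]
      refine ⟨?_, ?_, ?_⟩
      · rw [← eAux_add, Finset.HasAntidiagonal.mem_antidiagonal.mp hp, hd]
      · rw [eAux_apply_one, eAux_apply_zero]; exact Nat.le_add_right _ _
      · rw [eAux_apply_one, eAux_apply_zero]; exact Nat.le_add_right _ _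
    · intro p hp
      simp only [Finset.mem_filter, Finset.HasAntidiagonal.mem_antidiagonal] at hp
      obtain ⟨hsum, h1, h2⟩ := hp
      simp only [Finset.HasAntidiagonal.mem_antidiagonal]
      apply eAux_injective k
      rw [eAux_add, eAux_sub k _ h1, eAux_sub k _ h2, hsum, hd]
    · intro p _
      simp only
      exact Prod.ext (sub_eAux k _) (sub_eAux k _)
    · intro p hp
      simp only [Finset.mem_filter, Finset.HasAntidiagonal.mem_antidiagonal] at hp
      obtain ⟨_, h1, h2⟩ := hp
      simp only
      exact Prod.ext (eAux_sub k _ h1) (eAux_sub k _ h2)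
    · intro p _
      simp only
      rw [coeff_sFun_eAux, coeff_sFun_eAux]
  · rw [coeff_sFun, if_neg h, MvPowerSeries.coeff_mul, eq_comm]
    apply Finset.sum_eq_zero
    intro p hp
    by_cases h1 : k * p.1 1 ≤ p.1 0
    · have hd1 : d 1 = p.1 1 + p.2 1 := by
        rw [← Finset.HasAntidiagonal.mem_antidiagonal.mp hp]; simp [Finsupp.add_apply]
      have hd0 : d 0 = p.1 0 + p.2 0 := by
        rw [← Finset.HasAntidiagonal.mem_antidiagonal.mp hp]; simp [Finsupp.add_apply]
      have h2 : ¬ k * p.2 1 ≤ p.2 0 := by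
        intro h2
        apply h
        rw [hd1, hd0, mul_add]
        omega
      rw [coeff_sFun (f := g), if_neg h2, mul_zero]
    · rw [coeff_sFun, if_neg h1, zero_mul]

/-- substitution `X ↦ X, Y ↦ X^k Y` as a ring homomorphism -/
def sHom : MvPowerSeries (Fin 2) ℂ →+* MvPowerSeries (Fin 2) ℂ where
  toFun := sFun k
  map_one' := sFun_one k
  map_mul' := sFun_mul k
  map_zero' := by
    apply MvPowerSeries.ext; intro d
    rw [coeff_sFun]
    split_ifs <;> simp
  map_add' := sFun_add k

lemma sHom_X0 : sHom k (X 0) = (X 0 : MvPowerSeries (Fin 2) ℂ) := by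
  show sFun k (X 0) = X 0
  rw [MvPowerSeries.X_def, sFun_monomial]
  congr 1
  rw [eAux]
  have : (Finsupp.single (0 : Fin 2) 1) 1 = 0 := by
    rw [Finsupp.single_apply]; simp
  rw [this, mul_zero, Finsupp.single_zero, zero_add]

lemma sHom_X1 : sHom k (X 1) = (X 0 : MvPowerSeries (Fin 2) ℂ) ^ k * X 1 := by
  show sFun k (X 1) = X 0 ^ k * X 1
  rw [MvPowerSeries.X_def, sFun_monomial, MvPowerSeries.X_pow_eq,
    MvPowerSeries.monomial_mul_monomial, one_mul]
  congr 1
  rw [eAux]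
  have : (Finsupp.single (1 : Fin 2) 1) 1 = 1 := Finsupp.single_eq_same
  rw [this, mul_one]


/-- If `S f = (Y² - X²) g` then `g` is supported on `{(m,n) : m ≥ k(n+2)}`. -/
lemma support_of_quot (f g : MvPowerSeries (Fin 2) ℂ)
    (hfg : sFun k f = ((X 1 : MvPowerSeries (Fin 2) ℂ) ^ 2 - X 0 ^ 2) * g) :
    ∀ d : Fin 2 →₀ ℕ, d 0 < k * (d 1 + 2) → coeff d g = 0 := by
  classical
  have rel : ∀ d : Fin 2 →₀ ℕ,
      coeff d (sFun k f) =
        (if Finsupp.single 1 2 ≤ d then coeff (d - Finsupp.single 1 2) g else 0)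
        - (if Finsupp.single 0 2 ≤ d then coeff (d - Finsupp.single 0 2) g else 0) := by
    intro d
    rw [hfg, sub_mul, map_sub, MvPowerSeries.X_pow_eq, MvPowerSeries.X_pow_eq,
      MvPowerSeries.coeff_monomial_mul, MvPowerSeries.coeff_monomial_mul]
    split_ifs <;> simp
  suffices H : ∀ m : ℕ, ∀ d : Fin 2 →₀ ℕ, d 0 = m → d 0 < k * (d 1 + 2) → coeff d g = 0 from
    fun d hd => H (d 0) d rfl hd
  intro m
  induction m using Nat.strong_induction_on with
  | _ m ih =>
    intro d hdm hd
    set d' : Fin 2 →₀ ℕ := d + Finsupp.single 1 2 with hd'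
    have h1' : d' 1 = d 1 + 2 := by
      rw [hd', Finsupp.add_apply, Finsupp.single_eq_same]
    have h0' : d' 0 = d 0 := by
      rw [hd', Finsupp.add_apply, Finsupp.single_apply, if_neg (by decide), add_zero]
    have h0 : coeff d' (sFun k f) = 0 := by
      rw [coeff_sFun, if_neg]
      rw [h1', h0']
      omega
    have hrel := rel d'
    rw [h0, if_pos (Finsupp.single_le_iff.mpr (by rw [h1']; omega))] at hrel
    have hsub1 : d' - Finsupp.single 1 2 = d := by rw [hd', add_tsub_cancel_right]
    rw [hsub1] at hrel
    by_cases h2 : Finsupp.single (0 : Fin 2) 2 ≤ d'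
    · rw [if_pos h2] at hrel
      have h2' : (2 : ℕ) ≤ d 0 := by
        have := Finsupp.single_le_iff.mp h2
        rwa [h0'] at this
      set d2 : Fin 2 →₀ ℕ := d' - Finsupp.single 0 2 with hd2
      have hd2_0 : d2 0 = d 0 - 2 := by
        rw [hd2, Finsupp.tsub_apply, Finsupp.single_eq_same, h0']
      have hd2_1 : d2 1 = d 1 + 2 := by
        rw [hd2, Finsupp.tsub_apply, Finsupp.single_apply, if_neg (by decide), h1']
        rfl
      have hmono : k * (d 1 + 2) ≤ k * (d2 1 + 2) := by
        apply Nat.mul_le_mul_left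
        omega
      have hz : coeff d2 g = 0 := by
        apply ih (d 0 - 2) (by omega) d2 hd2_0
        omega
      rw [hz] at hrel
      rw [eq_comm, sub_eq_zero] at hrel
      exact hrel
    · rw [if_neg h2] at hrel
      rw [eq_comm, sub_eq_zero] at hrel
      exact hrel

/-- The quotient can be written as `X^{2k} · S h`. -/
lemma exists_sdiv (g : MvPowerSeries (Fin 2) ℂ)
    (hsupp : ∀ d : Fin 2 →₀ ℕ, d 0 < k * (d 1 + 2) → coeff d g = 0) :
    ∃ h : MvPowerSeries (Fin 2) ℂ,
      g = (X 0 : MvPowerSeries (Fin 2) ℂ) ^ (2 * k) * sFun k h := by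
  classical
  refine ⟨fun d => coeff (d + Finsupp.single 0 (k * d 1 + 2 * k)) g, ?_⟩
  apply MvPowerSeries.ext; intro d
  rw [MvPowerSeries.X_pow_eq, MvPowerSeries.coeff_monomial_mul]
  by_cases h1 : Finsupp.single (0 : Fin 2) (2 * k) ≤ d
  · rw [if_pos h1, one_mul]; erw [coeff_sFun]
    have h1' : 2 * k ≤ d 0 := Finsupp.single_le_iff.mp h1
    set d' : Fin 2 →₀ ℕ := d - Finsupp.single 0 (2 * k) with hd'
    have hd'_0 : d' 0 = d 0 - 2 * k := by
      rw [hd', Finsupp.tsub_apply, Finsupp.single_eq_same]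
    have hd'_1 : d' 1 = d 1 := by
      rw [hd', Finsupp.tsub_apply, Finsupp.single_apply, if_neg (by decide)]
      rfl
    by_cases h2 : k * d' 1 ≤ d' 0
    · rw [if_pos h2]
      set d2 : Fin 2 →₀ ℕ := d' - Finsupp.single 0 (k * d' 1) with hd2
      show coeff d g = coeff (d2 + Finsupp.single 0 (k * d2 1 + 2 * k)) g
      have hd2_1 : d2 1 = d 1 := by
        rw [hd2, Finsupp.tsub_apply, Finsupp.single_apply, if_neg (by decide), hd'_1]
        rfl
      have hdd : d2 = d - Finsupp.single 0 (k * d 1 + 2 * k) := by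
        rw [hd2, hd', tsub_tsub, ← Finsupp.single_add, hd'_1, add_comm (2 * k)]
      have hle : Finsupp.single (0 : Fin 2) (k * d 1 + 2 * k) ≤ d := by
        rw [Finsupp.single_le_iff]
        rw [hd'_1] at h2
        omega
      rw [hd2_1, hdd, tsub_add_cancel_of_le hle]
    · rw [if_neg h2]
      apply hsupp
      rw [hd'_1] at h2
      have : k * (d 1 + 2) = k * d 1 + 2 * k := by ring
      omega
  · rw [if_neg h1]
    apply hsupp
    rw [Finsupp.single_le_iff, not_le] at h1
    have : 2 * k ≤ k * (d 1 + 2) := by nlinarith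
    omega

end NodeAux

set_option synthInstance.maxHeartbeats 1000000 in
set_option maxHeartbeats 1000000 in
/-- in `A = ℂ[[x,y]]/(y² - x²)` (the complete local ring of a node),
for `k ≥ 1` the element `y_k = x^k y` satisfies `y_k² - x^{2k+2} = 0`, and this is
the only relation: the subring generated by `x` and `x^k y` is isomorphic to
`ℂ[[x, y_k]]/(y_k² - x^{2k+2})`, i.e. there is an injective ring homomorphism
`ℂ[[x,y]]/(y² - x^{2k+2}) → A` sending `x ↦ x` and `y ↦ x^k y`. -/
theorem node_subring_is_A_odd (k : ℕ) (hk : 1 ≤ k) :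
    letI A := MvPowerSeries (Fin 2) ℂ ⧸
      Ideal.span {(X 1 : MvPowerSeries (Fin 2) ℂ) ^ 2 - X 0 ^ 2}
    letI mkA : MvPowerSeries (Fin 2) ℂ →+* A := Ideal.Quotient.mk _
    -- the relation `y_k² = x^{2k+2}` holds in `A`:
    (mkA (X 0 ^ k * X 1)) ^ 2 = (mkA (X 0)) ^ (2 * k + 2) ∧
    -- and it is the only relation:
    ∃ φ : (MvPowerSeries (Fin 2) ℂ ⧸
        Ideal.span {(X 1 : MvPowerSeries (Fin 2) ℂ) ^ 2 - X 0 ^ (2 * k + 2)}) →+* A,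
      Function.Injective φ ∧
      φ (Ideal.Quotient.mk _ (X 0)) = mkA (X 0) ∧
      φ (Ideal.Quotient.mk _ (X 1)) = mkA (X 0 ^ k * X 1) := by
  refine ⟨?_, ?_⟩
  · rw [← map_pow, ← map_pow, Ideal.Quotient.mk_eq_mk_iff_sub_mem, Ideal.mem_span_singleton]
    exact ⟨X 0 ^ (2 * k), by ring⟩
  · have hlift : ∀ a ∈ Ideal.span {(X 1 : MvPowerSeries (Fin 2) ℂ) ^ 2 - X 0 ^ (2 * k + 2)},
        (Ideal.Quotient.mk
          (Ideal.span {(X 1 : MvPowerSeries (Fin 2) ℂ) ^ 2 - X 0 ^ 2})).comp (sHom k) a = 0 := by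
      intro a ha
      rw [Ideal.mem_span_singleton] at ha
      obtain ⟨c, hc⟩ := ha
      rw [RingHom.comp_apply, Ideal.Quotient.eq_zero_iff_mem, Ideal.mem_span_singleton]
      refine ⟨X 0 ^ (2 * k) * sHom k c, ?_⟩
      have hp : sHom k ((X 1 : MvPowerSeries (Fin 2) ℂ) ^ 2 - X 0 ^ (2 * k + 2))
          = (X 0 : MvPowerSeries (Fin 2) ℂ) ^ (2 * k) * (X 1 ^ 2 - X 0 ^ 2) := by
        rw [map_sub, map_pow, map_pow, sHom_X0, sHom_X1]
        ring
      rw [hc, map_mul, hp]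
      ring
    refine ⟨Ideal.Quotient.lift _ ((Ideal.Quotient.mk _).comp (sHom k)) hlift, ?_, ?_, ?_⟩
    · rw [injective_iff_map_eq_zero]
      intro a ha
      obtain ⟨f, rfl⟩ := Ideal.Quotient.mk_surjective a
      rw [Ideal.Quotient.lift_mk, RingHom.comp_apply, Ideal.Quotient.eq_zero_iff_mem,
        Ideal.mem_span_singleton] at ha
      rw [Ideal.Quotient.eq_zero_iff_mem, Ideal.mem_span_singleton]
      obtain ⟨g, hg⟩ := ha
      have hsupp := support_of_quot k f g hg
      obtain ⟨h, hh⟩ := exists_sdiv k g hsupp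
      refine ⟨h, ?_⟩
      apply sFun_injective k
      have e1 : sFun k f
          = ((X 1 : MvPowerSeries (Fin 2) ℂ) ^ 2 - X 0 ^ 2) * (X 0 ^ (2 * k) * sFun k h) := by
        rw [← hh]; exact hg
      have e2 : sFun k (((X 1 : MvPowerSeries (Fin 2) ℂ) ^ 2 - X 0 ^ (2 * k + 2)) * h)
          = ((X 1 : MvPowerSeries (Fin 2) ℂ) ^ 2 - X 0 ^ 2) * (X 0 ^ (2 * k) * sFun k h) := by
        show sHom k _ = _
        rw [map_mul, map_sub, map_pow, map_pow, sHom_X0, sHom_X1]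
        show _ * sFun k h = _
        ring
      rw [e1, e2]
    · rw [Ideal.Quotient.lift_mk, RingHom.comp_apply, sHom_X0]
    · rw [Ideal.Quotient.lift_mk, RingHom.comp_apply, sHom_X1]
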